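/- Fix M ∈ ℕ. For m⃗ = (m_1,...,m_M) ∈ [−1/2,1/2]^M and j ∈ ℤ set λ_j := −j² + ∑_{k=1}^M m_k/⟨j⟩^{2k+1} with ⟨j⟩ = √(1+j²). Then there exists a set 𝒩 ⊂ [−1/2,1/2]^M of Lebesgue measure zero such that for every m⃗ ∉ 𝒩 there exist γ > 0 and N₀ > 0 with the property: for every N ≤ M, every 0 ≤ ℓ ≤ N, and every (n_1,...,n_N) ∈ ℕ^N (requiring, in the case N even and ℓ = N/2, that the multisets {n_1,...,n_ℓ} and {n_{ℓ+1},...,n_N} differ), one has |λ_{n_1} + ... + λ_{n_ℓ} − λ_{n_{ℓ+1}} − ... − λ_{n_N}| ≥ γ · max(⟨n_1⟩,...,⟨n_N⟩)^{−N₀}. -/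

import Mathlib

open MeasureTheory

/-- Japanese bracket `⟨x⟩ = √(1+x²)`. -/
noncomputable def jap (x : ℝ) : ℝ := Real.sqrt (1 + x ^ 2)

/-- The perturbed eigenvalue `λ_j = -j² + ∑_{k=1}^M m_k/⟨j⟩^{2k+1}` (for `j ∈ ℕ`). -/
noncomputable def lam (M : ℕ) (m : Fin M → ℝ) (j : ℕ) : ℝ :=
  -(j : ℝ) ^ 2 + ∑ k : Fin M, m k / jap (j : ℝ) ^ (2 * ((k : ℕ) + 1) + 1)

/-- `tt v = ⟨v⟩⁻² = (1+v²)⁻¹`. -/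
noncomputable def tt (v : ℕ) : ℝ := ((1 : ℝ) + (v : ℝ) ^ 2)⁻¹

lemma jap_sq (x : ℝ) : jap x ^ 2 = 1 + x ^ 2 := Real.sq_sqrt (by positivity)

lemma jap_pos (x : ℝ) : 0 < jap x := Real.sqrt_pos.2 (by positivity)

lemma one_le_jap (x : ℝ) : 1 ≤ jap x := by
  have : (1:ℝ) = Real.sqrt 1 := (Real.sqrt_one).symm
  rw [this, jap]
  exact Real.sqrt_le_sqrt (by nlinarith [sq_nonneg x])

lemma jap_mono {v w : ℕ} (h : v ≤ w) : jap v ≤ jap w := by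
  apply Real.sqrt_le_sqrt
  have : (v:ℝ) ≤ (w:ℝ) := by exact_mod_cast h
  nlinarith [Nat.cast_nonneg (α := ℝ) v]

lemma tt_pos (v : ℕ) : 0 < tt v := by
  have : (0:ℝ) < 1 + (v:ℝ)^2 := by positivity
  exact inv_pos.2 this

lemma tt_le_one (v : ℕ) : tt v ≤ 1 := by
  rw [tt]
  rw [inv_le_one_iff₀]
  right
  nlinarith [sq_nonneg ((v:ℝ))]

lemma tt_eq (v : ℕ) : tt v = (jap v ^ 2)⁻¹ := by rw [tt, jap_sq]

lemma lam_eq (M : ℕ) (m : Fin M → ℝ) (v : ℕ) :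
    lam M m v = -(v : ℝ) ^ 2 + ∑ k : Fin M, m k * ((jap v)⁻¹ * tt v ^ ((k : ℕ) + 1)) := by
  rw [lam]
  congr 1
  apply Finset.sum_congr rfl
  intro k _
  have h1 : jap (v:ℝ) ^ (2 * ((k:ℕ) + 1) + 1) = jap v * (jap v ^ 2) ^ ((k:ℕ)+1) := by
    rw [← pow_mul]; ring
  rw [h1, tt_eq, div_eq_mul_inv, mul_inv, inv_pow]

section tuple

variable (ℓ N : ℕ) (n : ℕ → ℕ)

/-- multiset of values `n j`, `j ∈ [1,ℓ]`. -/
def Amul : Multiset ℕ := Multiset.map n (Finset.Icc 1 ℓ).val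

def Bmul : Multiset ℕ := Multiset.map n (Finset.Icc (ℓ+1) N).val

/-- finset of all values appearing. -/
def Vfin : Finset ℕ := (Amul ℓ n + Bmul ℓ N n).toFinset

/-- net count. -/
def Dco (v : ℕ) : ℤ := ((Amul ℓ n).count v : ℤ) - ((Bmul ℓ N n).count v : ℤ)

noncomputable def acoef (p : ℕ) : ℝ :=
  ∑ v ∈ Vfin ℓ N n, (Dco ℓ N n v : ℝ) * ((jap v)⁻¹ * tt v ^ p)

noncomputable def bcoef : ℝ := ∑ v ∈ Vfin ℓ N n, (Dco ℓ N n v : ℝ) * (-(v:ℝ)^2)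

lemma msum (A : Multiset ℕ) (h : A.toFinset ⊆ Vfin ℓ N n) (g : ℕ → ℝ) :
    (Multiset.map g A).sum = ∑ v ∈ Vfin ℓ N n, (A.count v : ℝ) * g v := by
  rw [Finset.sum_multiset_map_count, Finset.sum_subset h]
  · exact Finset.sum_congr rfl (fun v _ => by rw [nsmul_eq_mul])
  · intro v _ hv
    rw [Multiset.count_eq_zero_of_notMem (by simpa using hv)]
    simp

lemma subA : (Amul ℓ n).toFinset ⊆ Vfin ℓ N n := by
  intro v hv
  simp only [Vfin, Multiset.mem_toFinset, Multiset.mem_add] at hv ⊢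
  exact Or.inl hv

lemma subB : (Bmul ℓ N n).toFinset ⊆ Vfin ℓ N n := by
  intro v hv
  simp only [Vfin, Multiset.mem_toFinset, Multiset.mem_add] at hv ⊢
  exact Or.inr hv

lemma sum_split (g : ℕ → ℝ) :
    (∑ j ∈ Finset.Icc 1 ℓ, g (n j)) - ∑ j ∈ Finset.Icc (ℓ+1) N, g (n j)
      = ∑ v ∈ Vfin ℓ N n, (Dco ℓ N n v : ℝ) * g v := by
  have hA : ∑ j ∈ Finset.Icc 1 ℓ, g (n j) = (Multiset.map g (Amul ℓ n)).sum := by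
    rw [Amul, Multiset.map_map]; rfl
  have hB : ∑ j ∈ Finset.Icc (ℓ+1) N, g (n j) = (Multiset.map g (Bmul ℓ N n)).sum := by
    rw [Bmul, Multiset.map_map]; rfl
  rw [hA, hB, msum ℓ N n _ (subA ℓ N n) g, msum ℓ N n _ (subB ℓ N n) g,
    ← Finset.sum_sub_distrib]
  apply Finset.sum_congr rfl
  intro v _
  rw [Dco]
  push_cast
  ring

lemma f_eq (M : ℕ) (m : Fin M → ℝ) :
    (∑ j ∈ Finset.Icc 1 ℓ, lam M m (n j)) - ∑ j ∈ Finset.Icc (ℓ+1) N, lam M m (n j)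
      = bcoef ℓ N n + ∑ k : Fin M, m k * acoef ℓ N n ((k : ℕ) + 1) := by
  rw [sum_split ℓ N n (lam M m)]
  have : ∀ v ∈ Vfin ℓ N n, (Dco ℓ N n v : ℝ) * lam M m v
      = (Dco ℓ N n v : ℝ) * (-(v:ℝ)^2)
        + ∑ k : Fin M, m k * ((Dco ℓ N n v : ℝ) * ((jap v)⁻¹ * tt v ^ ((k:ℕ)+1))) := by
    intro v _
    rw [lam_eq, mul_add, Finset.mul_sum]
    congr 1
    exact Finset.sum_congr rfl (fun k _ => by ring)
  rw [Finset.sum_congr rfl this, Finset.sum_add_distrib]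
  congr 1
  rw [Finset.sum_comm]
  apply Finset.sum_congr rfl
  intro k _
  rw [acoef, Finset.mul_sum]


lemma card_Vfin (hlN : ℓ ≤ N) : (Vfin ℓ N n).card ≤ N := by
  refine le_trans (Multiset.toFinset_card_le _) ?_
  rw [Multiset.card_add, Amul, Bmul, Multiset.card_map, Multiset.card_map]
  show (Finset.Icc 1 ℓ).card + (Finset.Icc (ℓ+1) N).card ≤ N
  rw [Nat.card_Icc, Nat.card_Icc]
  omega

lemma jap_le_X (hlN : ℓ ≤ N) {v : ℕ} (hv : v ∈ Vfin ℓ N n) :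
    jap v ≤ jap (((Finset.Icc 1 N).sup n : ℕ) : ℝ) := by
  rw [Vfin, Multiset.mem_toFinset, Multiset.mem_add] at hv
  have : ∃ j ∈ Finset.Icc 1 N, n j = v := by
    rcases hv with h | h
    · rcases Multiset.mem_map.1 h with ⟨j, hj, hjv⟩
      refine ⟨j, ?_, hjv⟩
      rw [← Finset.mem_def] at hj
      simp only [Finset.mem_Icc] at hj ⊢
      omega
    · rcases Multiset.mem_map.1 h with ⟨j, hj, hjv⟩
      refine ⟨j, ?_, hjv⟩
      rw [← Finset.mem_def] at hj
      simp only [Finset.mem_Icc] at hj ⊢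
      omega
  rcases this with ⟨j, hj, hjv⟩
  have : v ≤ (Finset.Icc 1 N).sup n := hjv ▸ Finset.le_sup hj
  exact jap_mono this

lemma key (M : ℕ) (hNM : N ≤ M) (hlN : ℓ ≤ N) (hne : Amul ℓ n ≠ Bmul ℓ N n) :
    ∃ k : Fin M, ((2:ℝ)^(M+1) * jap (((Finset.Icc 1 N).sup n : ℕ) : ℝ) ^ (4*M+3))⁻¹
      ≤ |acoef ℓ N n ((k : ℕ) + 1)| := by
  set X := jap (((Finset.Icc 1 N).sup n : ℕ) : ℝ) with hXdef
  have hX1 : 1 ≤ X := one_le_jap _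
  have hXpos : 0 < X := lt_of_lt_of_le one_pos hX1
  -- pick v₀
  have hvex : ∃ v, (Amul ℓ n).count v ≠ (Bmul ℓ N n).count v := by
    by_contra h
    push_neg at h
    exact hne (Multiset.ext.2 h)
  obtain ⟨v₀, hv₀⟩ := hvex
  have hD0 : Dco ℓ N n v₀ ≠ 0 := by
    rw [Dco]
    intro h
    exact hv₀ (by omega)
  have hv₀V : v₀ ∈ Vfin ℓ N n := by
    rw [Vfin, Multiset.mem_toFinset, ← Multiset.count_pos, Multiset.count_add]
    omega
  set V' := (Vfin ℓ N n).erase v₀ with hV'def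
  set c := V'.card with hcdef
  have hcM : c + 1 ≤ M := by
    have h1 : c + 1 = (Vfin ℓ N n).card := by
      rw [hcdef, hV'def, Finset.card_erase_of_mem hv₀V]
      have : 1 ≤ (Vfin ℓ N n).card := Finset.card_pos.2 ⟨v₀, hv₀V⟩
      omega
    have h2 := card_Vfin ℓ N n hlN
    omega
  -- gap and size facts
  have httX : ∀ v ∈ Vfin ℓ N n, (X^2)⁻¹ ≤ tt v := by
    intro v hv
    rw [tt_eq]
    apply inv_anti₀ (pow_pos (jap_pos _) 2)
    have := jap_le_X ℓ N n hlN hv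
    nlinarith [jap_pos (v:ℝ), this]
  have hgap : ∀ v ∈ Vfin ℓ N n, ∀ u ∈ Vfin ℓ N n, u ≠ v → (X^4)⁻¹ ≤ |tt v - tt u| := by
    intro v hv u hu huv
    have h1 : (0:ℝ) < 1 + (v:ℝ)^2 := by positivity
    have h2 : (0:ℝ) < 1 + (u:ℝ)^2 := by positivity
    have hd : tt v - tt u = ((u:ℝ)^2 - (v:ℝ)^2) * ((1 + (v:ℝ)^2)⁻¹ * (1 + (u:ℝ)^2)⁻¹) := by
      rw [tt, tt]
      field_simp
      ring
    have habs : |tt v - tt u| = |(u:ℝ)^2 - (v:ℝ)^2| * ((1 + (v:ℝ)^2)⁻¹ * (1 + (u:ℝ)^2)⁻¹) := by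
      rw [hd, abs_mul]
      congr 1
      exact abs_of_pos (by positivity)
    rw [habs]
    have hone : (1:ℝ) ≤ |(u:ℝ)^2 - (v:ℝ)^2| := by
      have : (u:ℕ)^2 ≠ (v:ℕ)^2 := fun h => huv (Nat.pow_left_injective (by norm_num) h)
      rcases lt_or_gt_of_ne this with h | h
      · have : ((u:ℕ)^2 : ℝ) + 1 ≤ ((v:ℕ)^2 : ℝ) := by exact_mod_cast h
        push_cast at this
        rw [abs_sub_comm]
        rw [le_abs]
        left
        linarith
      · have : ((v:ℕ)^2 : ℝ) + 1 ≤ ((u:ℕ)^2 : ℝ) := by exact_mod_cast h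
        push_cast at this
        rw [le_abs]
        left
        linarith
    have hvX : 1 + (v:ℝ)^2 ≤ X^2 := by
      have := jap_le_X ℓ N n hlN hv
      nlinarith [jap_pos (v:ℝ), jap_sq (v:ℝ)]
    have huX : 1 + (u:ℝ)^2 ≤ X^2 := by
      have := jap_le_X ℓ N n hlN hu
      nlinarith [jap_pos (u:ℝ), jap_sq (u:ℝ)]
    calc (X^4)⁻¹ = (X^2)⁻¹ * (X^2)⁻¹ := by rw [← mul_inv]; ring_nf
      _ ≤ (1 + (v:ℝ)^2)⁻¹ * (1 + (u:ℝ)^2)⁻¹ := by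
          apply mul_le_mul (inv_anti₀ h1 hvX) (inv_anti₀ h2 huX)
            (by positivity) (by positivity)
      _ = 1 * ((1 + (v:ℝ)^2)⁻¹ * (1 + (u:ℝ)^2)⁻¹) := by ring
      _ ≤ |(u:ℝ)^2 - (v:ℝ)^2| * ((1 + (v:ℝ)^2)⁻¹ * (1 + (u:ℝ)^2)⁻¹) := by
          apply mul_le_mul_of_nonneg_right hone (by positivity)
  -- the key sum
  set F : ℕ → ℝ := fun v =>
    (Dco ℓ N n v : ℝ) * ((jap v)⁻¹ * tt v) * ∏ u ∈ V', (tt v - tt u) with hFdef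
  have hins : Vfin ℓ N n = insert v₀ V' := (Finset.insert_erase hv₀V).symm
  have step1 : ∑ v ∈ Vfin ℓ N n, F v = F v₀ := by
    rw [hins, Finset.sum_insert (Finset.notMem_erase _ _)]
    have : ∑ v ∈ V', F v = 0 := by
      apply Finset.sum_eq_zero
      intro v hv
      have : ∏ u ∈ V', (tt v - tt u) = 0 := Finset.prod_eq_zero hv (by ring)
      rw [hFdef]
      simp only
      rw [this, mul_zero]
    rw [this, add_zero]
  have step2 : ∑ v ∈ Vfin ℓ N n, F v
      = ∑ S' ∈ V'.powerset, (∏ u ∈ S', (-tt u)) * acoef ℓ N n (c - S'.card + 1) := by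
    have hFv : ∀ v, F v = ∑ S' ∈ V'.powerset,
        (∏ u ∈ S', (-tt u)) * ((Dco ℓ N n v : ℝ) * ((jap v)⁻¹ * tt v ^ (c - S'.card + 1))) := by
      intro v
      have hexp : ∏ u ∈ V', (tt v - tt u)
          = ∑ S' ∈ V'.powerset, (∏ u ∈ S', (-tt u)) * (tt v) ^ (c - S'.card) := by
        have h := Finset.prod_add (fun u => -tt u) (fun _ => tt v) V'
        have hl : ∏ u ∈ V', (tt v - tt u) = ∏ u ∈ V', ((-tt u) + tt v) := by
          apply Finset.prod_congr rfl; intro u _; ring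
        rw [hl, h]
        apply Finset.sum_congr rfl
        intro S' hS'
        rw [Finset.prod_const, Finset.card_sdiff_of_subset (Finset.mem_powerset.1 hS')]
      rw [hFdef]
      simp only
      rw [hexp, Finset.mul_sum]
      apply Finset.sum_congr rfl
      intro S' _
      rw [pow_succ]
      ring
    calc ∑ v ∈ Vfin ℓ N n, F v
        = ∑ v ∈ Vfin ℓ N n, ∑ S' ∈ V'.powerset,
            (∏ u ∈ S', (-tt u)) * ((Dco ℓ N n v : ℝ) * ((jap v)⁻¹ * tt v ^ (c - S'.card + 1))) :=
          Finset.sum_congr rfl (fun v _ => hFv v)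
      _ = ∑ S' ∈ V'.powerset, (∏ u ∈ S', (-tt u)) * acoef ℓ N n (c - S'.card + 1) := by
          rw [Finset.sum_comm]
          apply Finset.sum_congr rfl
          intro S' _
          rw [acoef, Finset.mul_sum]
  -- lower bound for |F v₀|
  have hjv₀ : X⁻¹ ≤ (jap (v₀:ℝ))⁻¹ := inv_anti₀ (jap_pos _) (jap_le_X ℓ N n hlN hv₀V)
  have hD1 : (1:ℝ) ≤ |(Dco ℓ N n v₀ : ℝ)| := by
    rw [← Int.cast_abs]
    exact_mod_cast Int.one_le_abs hD0
  have hprodlow : ((X^4)⁻¹)^c ≤ ∏ u ∈ V', |tt v₀ - tt u| := by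
    rw [← Finset.prod_const]
    apply Finset.prod_le_prod
    · intro u _; positivity
    · intro u hu
      exact hgap v₀ hv₀V u (Finset.mem_of_mem_erase hu) (Finset.ne_of_mem_erase hu)
  have hFlow : (X ^ (4*c+3))⁻¹ ≤ |F v₀| := by
    have habs : |F v₀| = |(Dco ℓ N n v₀ : ℝ)| * ((jap (v₀:ℝ))⁻¹ * tt v₀)
        * ∏ u ∈ V', |tt v₀ - tt u| := by
      rw [hFdef]
      simp only
      rw [abs_mul, abs_mul, Finset.abs_prod,
        abs_of_pos (mul_pos (inv_pos.2 (jap_pos _)) (tt_pos v₀))]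
    rw [habs]
    have hX0 : X ≠ 0 := ne_of_gt hXpos
    have heq : (X ^ (4*c+3))⁻¹ = 1 * (X⁻¹ * (X^2)⁻¹) * ((X^4)⁻¹)^c := by
      rw [one_mul, inv_pow, ← mul_inv, ← mul_inv]
      congr 1
      ring
    rw [heq]
    have hj0 : (0:ℝ) ≤ (jap (v₀:ℝ))⁻¹ := le_of_lt (inv_pos.2 (jap_pos _))
    apply mul_le_mul
    · apply mul_le_mul hD1
      · exact mul_le_mul hjv₀ (httX v₀ hv₀V) (by positivity) hj0
      · positivity
      · exact abs_nonneg _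
    · exact hprodlow
    · positivity
    · exact mul_nonneg (abs_nonneg _) (mul_nonneg hj0 (le_of_lt (tt_pos v₀)))
  -- conclude by contradiction
  by_contra hcon
  push_neg at hcon
  have hup : |∑ v ∈ Vfin ℓ N n, F v| ≤ (2:ℝ)^c * ((2:ℝ)^(M+1) * X^(4*M+3))⁻¹ := by
    rw [step2]
    calc |∑ S' ∈ V'.powerset, (∏ u ∈ S', (-tt u)) * acoef ℓ N n (c - S'.card + 1)|
        ≤ ∑ S' ∈ V'.powerset, |(∏ u ∈ S', (-tt u)) * acoef ℓ N n (c - S'.card + 1)| :=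
          Finset.abs_sum_le_sum_abs _ _
      _ ≤ ∑ S' ∈ V'.powerset, ((2:ℝ)^(M+1) * X^(4*M+3))⁻¹ := by
          apply Finset.sum_le_sum
          intro S' hS'
          rw [abs_mul]
          have h1 : |∏ u ∈ S', (-tt u)| ≤ 1 := by
            rw [Finset.abs_prod]
            apply Finset.prod_le_one
            · intro u _; positivity
            · intro u _
              rw [abs_neg, abs_of_pos (tt_pos u)]
              exact tt_le_one u
          have hk : c - S'.card < M := by omega
          have h2 : |acoef ℓ N n (c - S'.card + 1)| ≤ ((2:ℝ)^(M+1) * X^(4*M+3))⁻¹ := by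
            have := hcon ⟨c - S'.card, hk⟩
            simpa using this.le
          calc |∏ u ∈ S', (-tt u)| * |acoef ℓ N n (c - S'.card + 1)|
              ≤ 1 * ((2:ℝ)^(M+1) * X^(4*M+3))⁻¹ := by
                apply mul_le_mul h1 h2 (abs_nonneg _) (by norm_num)
            _ = ((2:ℝ)^(M+1) * X^(4*M+3))⁻¹ := one_mul _
      _ = (2:ℝ)^c * ((2:ℝ)^(M+1) * X^(4*M+3))⁻¹ := by
          rw [Finset.sum_const, Finset.card_powerset, nsmul_eq_mul]
          push_cast
          ring
  rw [step1] at hup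
  have hlow2 : (X ^ (4*M+3))⁻¹ ≤ |F v₀| := by
    refine le_trans ?_ hFlow
    apply inv_anti₀ (by positivity)
    exact pow_le_pow_right₀ hX1 (by omega)
  have hfin : (2:ℝ)^c * ((2:ℝ)^(M+1) * X^(4*M+3))⁻¹ < (X ^ (4*M+3))⁻¹ := by
    have h2 : (2:ℝ)^c < 2^(M+1) := by
      apply pow_lt_pow_right₀ (by norm_num)
      omega
    have hP : (0:ℝ) < X ^ (4*M+3) := by positivity
    rw [mul_inv]
    have : (2:ℝ)^c * ((2^(M+1))⁻¹ * (X^(4*M+3))⁻¹)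
        = ((2:ℝ)^c * (2^(M+1))⁻¹) * (X^(4*M+3))⁻¹ := by ring
    rw [this]
    have hlt1 : (2:ℝ)^c * ((2:ℝ)^(M+1))⁻¹ < 1 := by
      rw [mul_inv_lt_iff₀ (by positivity)]
      linarith
    calc ((2:ℝ)^c * (2^(M+1))⁻¹) * (X^(4*M+3))⁻¹ < 1 * (X^(4*M+3))⁻¹ :=
          mul_lt_mul_of_pos_right hlt1 (by positivity)
      _ = (X^(4*M+3))⁻¹ := one_mul _
  exact absurd (le_trans hlow2 hup) (not_le.2 hfin)

end tuple


lemma measure_slab (M : ℕ) (a : Fin M → ℝ) (b δ α : ℝ) (hδ : 0 ≤ δ) (hα : 0 < α)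
    (k0 : Fin M) (hk : α ≤ |a k0|) :
    volume ((Set.univ.pi fun _ : Fin M => Set.Icc (-(1/2):ℝ) (1/2))
        ∩ {m : Fin M → ℝ | |b + ∑ k, m k * a k| ≤ δ})
      ≤ ENNReal.ofReal (2 * δ / α) := by
  classical
  have ha0 : a k0 ≠ 0 := by
    intro h
    rw [h, abs_zero] at hk
    linarith
  set p : Fin M → Prop := fun i => i ≠ k0 with hp
  set S := (Set.univ.pi fun _ : Fin M => Set.Icc (-(1/2):ℝ) (1/2))
      ∩ {m : Fin M → ℝ | |b + ∑ k, m k * a k| ≤ δ} with hS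
  have hg : Measurable fun m : Fin M → ℝ => b + ∑ k, m k * a k := by
    apply Measurable.add measurable_const
    apply Finset.measurable_sum
    intro k _
    exact (measurable_pi_apply k).mul_const _
  have hSmeas : MeasurableSet S := by
    apply MeasurableSet.inter
    · exact MeasurableSet.univ_pi fun i => measurableSet_Icc
    · have : {m : Fin M → ℝ | |b + ∑ k, m k * a k| ≤ δ}
          = (fun m : Fin M → ℝ => b + ∑ k, m k * a k) ⁻¹' Set.Icc (-δ) δ := by
        ext m
        simp [abs_le]
      rw [this]
      exact hg measurableSet_Icc
  set e := MeasurableEquiv.piEquivPiSubtypeProd (fun _ : Fin M => ℝ) p with he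
  have hmp := measurePreserving_piEquivPiSubtypeProd (fun _ : Fin M => (volume : Measure ℝ)) p
  set ν₁ : Measure ({i // p i} → ℝ) := Measure.pi fun _ => volume with hν₁
  set ν₂ : Measure ({i // ¬ p i} → ℝ) := Measure.pi fun _ => volume with hν₂
  have hT : MeasurableSet (e.symm ⁻¹' S) := e.symm.measurable hSmeas
  have hpre : ⇑e ⁻¹' (⇑e.symm ⁻¹' S) = S := by
    rw [← Set.preimage_comp, MeasurableEquiv.symm_comp_self, Set.preimage_id]
  have h1 : volume S = (ν₁.prod ν₂) (e.symm ⁻¹' S) := by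
    rw [volume_pi, ← hmp.measure_preimage hT.nullMeasurableSet, hpre]
  -- the unique element of the second factor
  have hk0 : ¬ p k0 := by simp [hp]
  set j0 : {i // ¬ p i} := ⟨k0, hk0⟩ with hj0
  have huniq : ∀ j : {i // ¬ p i}, j = j0 := by
    intro j
    apply Subtype.ext
    have := j.2
    simpa [hp, not_not] using this
  haveI : Unique {i // ¬ p i} := ⟨⟨j0⟩, huniq⟩
  -- value of the affine function on e.symm (x, y)
  have hgval : ∀ (x : {i // p i} → ℝ) (y : {i // ¬ p i} → ℝ),
      b + ∑ k, (e.symm (x, y)) k * a k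
        = (b + ∑ j : {i // p i}, x j * a (j : Fin M)) + y j0 * a k0 := by
    intro x y
    have hsplit : ∑ k, (e.symm (x, y)) k * a k
        = (∑ j : {i // p i}, (e.symm (x, y)) (j : Fin M) * a (j : Fin M))
          + ∑ j : {i // ¬ p i}, (e.symm (x, y)) (j : Fin M) * a (j : Fin M) :=
      (Fintype.sum_subtype_add_sum_subtype p (fun k => (e.symm (x, y)) k * a k)).symm
    have hx : ∀ j : {i // p i}, (e.symm (x, y)) (j : Fin M) = x j := by
      intro j
      have h0 : (e.symm (x, y)) (j : Fin M)
          = (Equiv.piEquivPiSubtypeProd p (fun _ : Fin M => ℝ)).symm (x, y) (j : Fin M) := rfl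
      rw [h0, Equiv.piEquivPiSubtypeProd_symm_apply, dif_pos j.2]
    have hy : (e.symm (x, y)) (j0 : Fin M) = y j0 := by
      have h0 : (e.symm (x, y)) (j0 : Fin M)
          = (Equiv.piEquivPiSubtypeProd p (fun _ : Fin M => ℝ)).symm (x, y) (j0 : Fin M) := rfl
      rw [h0, Equiv.piEquivPiSubtypeProd_symm_apply, dif_neg hk0]
    rw [hsplit]
    have h2 : ∑ j : {i // ¬ p i}, (e.symm (x, y)) (j : Fin M) * a (j : Fin M)
        = y j0 * a k0 := by
      rw [Fintype.sum_unique (fun j : {i // ¬ p i} => (e.symm (x, y)) (j : Fin M) * a (j : Fin M))]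
      simp only [huniq default]
      rw [hy]
    rw [h2]
    have h3 : ∑ j : {i // p i}, (e.symm (x, y)) (j : Fin M) * a (j : Fin M)
        = ∑ j : {i // p i}, x j * a (j : Fin M) :=
      Finset.sum_congr rfl (fun j _ => by rw [hx j])
    rw [h3]
    ring
  -- slices
  set Cx : ({i // p i} → ℝ) → ℝ := fun x => b + ∑ j : {i // p i}, x j * a (j : Fin M) with hCx
  set lo : ({i // p i} → ℝ) → ℝ :=
    fun x => min ((-δ - Cx x) / a k0) ((δ - Cx x) / a k0) with hlo
  set hi : ({i // p i} → ℝ) → ℝ :=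
    fun x => max ((-δ - Cx x) / a k0) ((δ - Cx x) / a k0) with hhi
  have hslice : ∀ x : {i // p i} → ℝ,
      Prod.mk x ⁻¹' (⇑e.symm ⁻¹' S) ⊆ Set.univ.pi fun _ : {i // ¬ p i} => Set.Icc (lo x) (hi x) := by
    intro x y hy
    simp only [Set.mem_preimage] at hy
    have hyS := hy.2
    simp only [Set.mem_setOf_eq] at hyS
    rw [hgval x y] at hyS
    have habs := abs_le.1 hyS
    have hCeq : Cx x = b + ∑ j : {i // p i}, x j * a (j : Fin M) := rfl
    have hmem : y j0 ∈ Set.Icc (lo x) (hi x) := by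
      rcases lt_or_gt_of_ne ha0 with hneg | hpos
      · constructor
        · refine le_trans (min_le_right _ _) ?_
          rw [div_le_iff_of_neg hneg]
          linarith [habs.1]
        · refine le_trans ?_ (le_max_left _ _)
          rw [le_div_iff_of_neg hneg]
          linarith [habs.2]
      · constructor
        · refine le_trans (min_le_left _ _) ?_
          rw [div_le_iff₀ hpos]
          linarith [habs.1]
        · refine le_trans ?_ (le_max_right _ _)
          rw [le_div_iff₀ hpos]
          linarith [habs.2]
    intro j _
    rw [huniq j]
    exact hmem
  have hslice_empty : ∀ x : {i // p i} → ℝ,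
      x ∉ (Set.univ.pi fun _ : {i // p i} => Set.Icc (-(1/2):ℝ) (1/2)) →
      Prod.mk x ⁻¹' (⇑e.symm ⁻¹' S) = ∅ := by
    intro x hx
    rw [Set.eq_empty_iff_forall_notMem]
    intro y hy
    apply hx
    intro j _
    have hyS := hy.1
    have := hyS (j : Fin M) (Set.mem_univ _)
    have hxj : (e.symm (x, y)) (j : Fin M) = x j := by
      have h0 : (e.symm (x, y)) (j : Fin M)
          = (Equiv.piEquivPiSubtypeProd p (fun _ : Fin M => ℝ)).symm (x, y) (j : Fin M) := rfl
      rw [h0, Equiv.piEquivPiSubtypeProd_symm_apply, dif_pos j.2]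
    rwa [hxj] at this
  -- the interval has small measure
  have hIcc : ∀ x : {i // p i} → ℝ,
      volume (Set.Icc (lo x) (hi x)) ≤ ENNReal.ofReal (2 * δ / α) := by
    intro x
    rw [Real.volume_Icc]
    apply ENNReal.ofReal_le_ofReal
    have : hi x - lo x = |(δ - Cx x) / a k0 - (-δ - Cx x) / a k0| := max_sub_min_eq_abs _ _
    rw [this]
    have h2 : (δ - Cx x) / a k0 - (-δ - Cx x) / a k0 = 2 * δ / a k0 := by
      field_simp
      ring
    rw [h2, abs_div, abs_of_nonneg (by linarith : (0:ℝ) ≤ 2*δ)]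
    gcongr
  -- put it together with Fubini
  have h2 := Measure.prod_apply (μ := ν₁) (ν := ν₂) hT
  rw [h1, h2]
  set cubeR := Set.univ.pi fun _ : {i // p i} => Set.Icc (-(1/2):ℝ) (1/2) with hcubeR
  have hcubeRmeas : MeasurableSet cubeR := MeasurableSet.univ_pi fun i => measurableSet_Icc
  have hpt : ∀ x : {i // p i} → ℝ,
      ν₂ (Prod.mk x ⁻¹' (⇑e.symm ⁻¹' S))
        ≤ cubeR.indicator (fun _ => ENNReal.ofReal (2 * δ / α)) x := by
    intro x
    by_cases hx : x ∈ cubeR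
    · rw [Set.indicator_of_mem hx]
      refine le_trans (measure_mono (hslice x)) ?_
      have hpi : ν₂ (Set.univ.pi fun _ : {i // ¬ p i} => Set.Icc (lo x) (hi x))
          = ∏ j : {i // ¬ p i}, volume (Set.Icc (lo x) (hi x)) := by
        rw [hν₂, Measure.pi_pi]
      rw [hpi, Fintype.prod_unique (fun _ : {i // ¬ p i} => volume (Set.Icc (lo x) (hi x)))]
      exact hIcc x
    · rw [Set.indicator_of_notMem hx, hslice_empty x hx]
      simp
  calc ∫⁻ x, ν₂ (Prod.mk x ⁻¹' (⇑e.symm ⁻¹' S)) ∂ν₁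
      ≤ ∫⁻ x, cubeR.indicator (fun _ => ENNReal.ofReal (2 * δ / α)) x ∂ν₁ :=
        lintegral_mono hpt
    _ = ENNReal.ofReal (2 * δ / α) * ν₁ cubeR := by
        rw [lintegral_indicator hcubeRmeas, setLIntegral_const]
    _ ≤ ENNReal.ofReal (2 * δ / α) := by
        have hc1 : ν₁ cubeR = 1 := by
          rw [hν₁, hcubeR, Measure.pi_pi]
          have : ∀ j : {i // p i}, volume (Set.Icc (-(1/2):ℝ) (1/2)) = 1 := by
            intro j
            rw [Real.volume_Icc]
            norm_num
          rw [Finset.prod_congr rfl (fun j _ => this j), Finset.prod_const_one]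
        rw [hc1, mul_one]




lemma tsum_pi_prod (q : ℕ → ENNReal) :
    ∀ N : ℕ, (∑' ν : Fin N → ℕ, ∏ j, q (ν j)) = (∑' n, q n) ^ N := by
  intro N
  induction N with
  | zero =>
    have h : ∀ ν : Fin 0 → ℕ, (∏ j, q (ν j)) = 1 := fun ν => Finset.prod_of_isEmpty _
    rw [tsum_congr h]
    haveI : Unique (Fin 0 → ℕ) := ⟨⟨fun j => j.elim0⟩, fun ν => funext fun j => j.elim0⟩
    rw [tsum_eq_single default (fun b hb => absurd (Subsingleton.elim b default) hb)]
    simp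
  | succ N ih =>
    have he := (Fin.consEquiv (fun _ : Fin (N+1) => ℕ)).tsum_eq
      (f := fun ν : Fin (N+1) → ℕ => ∏ j, q (ν j))
    rw [← he]
    have h2 : ∀ p : ℕ × (Fin N → ℕ),
        (∏ j, q ((Fin.consEquiv (fun _ : Fin (N+1) => ℕ)) p j))
          = q p.1 * ∏ j : Fin N, q (p.2 j) := by
      intro p
      obtain ⟨x, f⟩ := p
      simp only [Fin.consEquiv_apply]
      have hc : ∀ j : Fin (N+1), q ((Fin.cons x f : Fin (N+1) → ℕ) j)
          = (Fin.cons (q x) (fun i => q (f i)) : Fin (N+1) → ENNReal) j := by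
        intro j
        refine Fin.cases ?_ ?_ j
        · simp
        · intro i; simp
      calc ∏ j : Fin (N+1), q ((Fin.cons x f : Fin (N+1) → ℕ) j)
          = ∏ j : Fin (N+1), (Fin.cons (q x) (fun i => q (f i)) : Fin (N+1) → ENNReal) j :=
            Finset.prod_congr rfl (fun j _ => hc j)
        _ = q x * ∏ j : Fin N, q (f j) := Fin.prod_cons _ _
    rw [tsum_congr h2,
      ENNReal.tsum_prod (f := fun (a : ℕ) (b : Fin N → ℕ) => q a * ∏ j, q (b j))]
    have h3 : ∀ a : ℕ, (∑' ν : Fin N → ℕ, q a * ∏ j, q (ν j))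
        = q a * (∑' n, q n) ^ N := by
      intro a
      rw [ENNReal.tsum_mul_left, ih]
    rw [tsum_congr h3, ENNReal.tsum_mul_right, pow_succ]
    ring

lemma summable_tt : Summable (fun n : ℕ => tt n) := by
  have h1 : Summable (fun n : ℕ => 1 / (n : ℝ) ^ 2) :=
    Real.summable_one_div_nat_pow.2 one_lt_two
  have h2 : Summable (fun n : ℕ => 1 / ((n : ℝ) + 1) ^ 2) := by
    have := (summable_nat_add_iff 1).2 h1
    apply this.congr
    intro n
    push_cast
    norm_num
  apply Summable.of_nonneg_of_le (fun n => le_of_lt (by rw [tt]; positivity)) _ (h2.mul_left 2)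
  intro n
  rw [tt]
  rw [show (2:ℝ) * (1 / ((n:ℝ)+1)^2) = (((n:ℝ)+1)^2 / 2)⁻¹ by field_simp]
  apply inv_anti₀ (by positivity)
  nlinarith [sq_nonneg ((n:ℝ) - 1)]

lemma Qsum_ne_top : (∑' n : ℕ, ENNReal.ofReal (tt n)) ≠ ⊤ := by
  rw [← ENNReal.ofReal_tsum_of_nonneg (fun n => le_of_lt (by rw [tt]; positivity)) summable_tt]
  exact ENNReal.ofReal_ne_top


section assembly

/-- extension of a finite tuple to `ℕ → ℕ`. -/
def ext (N : ℕ) (ν : Fin N → ℕ) (j : ℕ) : ℕ :=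
  if h : j - 1 < N then ν ⟨j - 1, h⟩ else 0

lemma ext_eq (N : ℕ) (ν : Fin N → ℕ) (j : ℕ) (h : j - 1 < N) :
    ext N ν j = ν ⟨j - 1, h⟩ := dif_pos h

/-- the bad set of parameters for a single tuple. -/
def BadSet (M : ℕ) (γ : ℝ) (N ℓ : ℕ) (n : ℕ → ℕ) : Set (Fin M → ℝ) :=
  {m | ℓ ≤ N ∧ N ≤ M ∧ Amul ℓ n ≠ Bmul ℓ N n ∧
    m ∈ Set.univ.pi (fun _ : Fin M => Set.Icc (-(1/2) : ℝ) (1/2)) ∧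
    |(∑ j ∈ Finset.Icc 1 ℓ, lam M m (n j)) - ∑ j ∈ Finset.Icc (ℓ+1) N, lam M m (n j)|
      < γ * jap (((Finset.Icc 1 N).sup n : ℕ) : ℝ) ^ (-(((6*M+6 : ℕ) : ℝ)))}

lemma rpow_eq (M : ℕ) (X : ℝ) (hX : 0 < X) :
    X ^ (-(((6*M+6 : ℕ) : ℝ))) = (X ^ (6*M+6 : ℕ))⁻¹ := by
  rw [Real.rpow_neg (le_of_lt hX), Real.rpow_natCast]

lemma BadSet_vol (M : ℕ) (γ : ℝ) (hγ : 0 ≤ γ) (N ℓ : ℕ) (n : ℕ → ℕ) :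
    volume (BadSet M γ N ℓ n)
      ≤ ENNReal.ofReal ((2:ℝ)^(M+2) * γ)
          * ∏ j ∈ Finset.Icc 1 N, ENNReal.ofReal (tt (n j)) := by
  by_cases hcond : ℓ ≤ N ∧ N ≤ M ∧ Amul ℓ n ≠ Bmul ℓ N n
  · obtain ⟨hlN, hNM, hne⟩ := hcond
    set X := jap (((Finset.Icc 1 N).sup n : ℕ) : ℝ) with hXdef
    have hX1 : 1 ≤ X := one_le_jap _
    have hXpos : 0 < X := lt_of_lt_of_le one_pos hX1
    obtain ⟨k0, hk0⟩ := key ℓ N n M hNM hlN hne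
    set α : ℝ := ((2:ℝ)^(M+1) * X ^ (4*M+3))⁻¹ with hα
    have hαpos : 0 < α := by positivity
    set δ : ℝ := γ * (X ^ (6*M+6 : ℕ))⁻¹ with hδdef
    have hδ : 0 ≤ δ := by positivity
    have hsub : BadSet M γ N ℓ n ⊆
        (Set.univ.pi fun _ : Fin M => Set.Icc (-(1/2):ℝ) (1/2))
          ∩ {m : Fin M → ℝ | |bcoef ℓ N n + ∑ k, m k * acoef ℓ N n ((k:ℕ)+1)| ≤ δ} := by
      intro m hm
      obtain ⟨_, _, _, hcube, hlt⟩ := hm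
      refine ⟨hcube, ?_⟩
      rw [Set.mem_setOf_eq, ← f_eq ℓ N n M m]
      rw [rpow_eq M X hXpos] at hlt
      exact le_of_lt hlt
    refine le_trans (measure_mono hsub) ?_
    refine le_trans (measure_slab M (fun k => acoef ℓ N n ((k:ℕ)+1)) (bcoef ℓ N n) δ α hδ
      hαpos k0 hk0) ?_
    -- 2δ/α = 2^(M+2) γ X^(4M+3) / X^(6M+6) ≤ 2^(M+2) γ ∏ tt
    have hle : 2 * δ / α ≤ (2:ℝ)^(M+2) * γ * ∏ j ∈ Finset.Icc 1 N, tt (n j) := by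
      have h1 : 2 * δ / α = (2:ℝ)^(M+2) * γ * (X ^ (4*M+3) * (X ^ (6*M+6 : ℕ))⁻¹) := by
        rw [hδdef, hα]
        field_simp
        ring
      rw [h1]
      apply mul_le_mul_of_nonneg_left ?_ (by positivity)
      have h2 : X ^ (4*M+3) * (X ^ (6*M+6 : ℕ))⁻¹ = (X ^ (2*M+3))⁻¹ := by
        have hadd : (4*M+3) + (2*M+3) = 6*M+6 := by ring
        field_simp
        rw [← pow_add, hadd]
      rw [h2]
      have h3 : (X ^ (2*M+3))⁻¹ ≤ (X ^ (2*N))⁻¹ := by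
        apply inv_anti₀ (by positivity)
        exact pow_le_pow_right₀ hX1 (by omega)
      refine le_trans h3 ?_
      have h4 : (X ^ (2*N))⁻¹ = ∏ _j ∈ Finset.Icc 1 N, (X^2)⁻¹ := by
        rw [Finset.prod_const, Nat.card_Icc, show N + 1 - 1 = N from rfl,
          inv_pow, ← pow_mul]
      rw [h4]
      apply Finset.prod_le_prod
      · intro j _; positivity
      · intro j hj
        rw [tt_eq]
        apply inv_anti₀ (pow_pos (jap_pos _) 2)
        have hjle : n j ≤ (Finset.Icc 1 N).sup n := Finset.le_sup hj
        have := jap_mono hjle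
        nlinarith [jap_pos ((n j : ℕ) : ℝ)]
    calc ENNReal.ofReal (2 * δ / α)
        ≤ ENNReal.ofReal ((2:ℝ)^(M+2) * γ * ∏ j ∈ Finset.Icc 1 N, tt (n j)) :=
          ENNReal.ofReal_le_ofReal hle
      _ = ENNReal.ofReal ((2:ℝ)^(M+2) * γ) * ENNReal.ofReal (∏ j ∈ Finset.Icc 1 N, tt (n j)) := by
          rw [ENNReal.ofReal_mul (by positivity)]
      _ = ENNReal.ofReal ((2:ℝ)^(M+2) * γ) * ∏ j ∈ Finset.Icc 1 N, ENNReal.ofReal (tt (n j)) := by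
          congr 1
          exact ENNReal.ofReal_prod_of_nonneg (fun j _ => le_of_lt (tt_pos _))
  · have : BadSet M γ N ℓ n = ∅ := by
      rw [Set.eq_empty_iff_forall_notMem]
      intro m hm
      exact hcond ⟨hm.1, hm.2.1, hm.2.2.1⟩
    rw [this]
    simp

/-- union of all bad sets at level γ -/
def BadU (M : ℕ) (γ : ℝ) : Set (Fin M → ℝ) :=
  ⋃ i : (Fin (M+1)) × (Fin (M+1)), ⋃ ν : Fin (i.1 : ℕ) → ℕ,
    BadSet M γ (i.1 : ℕ) (i.2 : ℕ) (ext (i.1 : ℕ) ν)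

lemma prod_ext (N : ℕ) (ν : Fin N → ℕ) :
    (∏ j ∈ Finset.Icc 1 N, ENNReal.ofReal (tt (ext N ν j)))
      = ∏ j : Fin N, ENNReal.ofReal (tt (ν j)) := by
  refine Finset.prod_bij'
    (fun (a : ℕ) (ha : a ∈ Finset.Icc 1 N) =>
      (⟨a - 1, by simp only [Finset.mem_Icc] at ha; omega⟩ : Fin N))
    (fun (b : Fin N) _ => (b : ℕ) + 1) (fun a ha => Finset.mem_univ _) ?_ ?_ ?_ ?_
  · intro b _
    simp only [Finset.mem_Icc]
    omega
  · intro a ha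
    simp only
    simp only [Finset.mem_Icc] at ha
    omega
  · intro b _
    apply Fin.ext
    simp
  · intro a ha
    have h : a - 1 < N := by simp only [Finset.mem_Icc] at ha; omega
    rw [ext_eq N ν a h]

noncomputable def KK (M : ℕ) : ENNReal :=
  ENNReal.ofReal ((2:ℝ)^(M+2))
    * (((M:ENNReal)+1) * ((M:ENNReal)+1) * ((∑' n : ℕ, ENNReal.ofReal (tt n)) + 1) ^ M)

lemma KK_ne_top (M : ℕ) : KK M ≠ ⊤ := by
  rw [KK]
  apply ENNReal.mul_ne_top ENNReal.ofReal_ne_top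
  apply ENNReal.mul_ne_top
  · exact ENNReal.mul_ne_top (by simp) (by simp)
  · exact ENNReal.pow_ne_top (ENNReal.add_ne_top.2 ⟨Qsum_ne_top, by simp⟩)

lemma BadU_vol (M : ℕ) (γ : ℝ) (hγ : 0 ≤ γ) :
    volume (BadU M γ) ≤ ENNReal.ofReal γ * KK M := by
  set Q := ∑' n : ℕ, ENNReal.ofReal (tt n) with hQ
  have step : ∀ i : (Fin (M+1)) × (Fin (M+1)),
      volume (⋃ ν : Fin (i.1 : ℕ) → ℕ, BadSet M γ (i.1 : ℕ) (i.2 : ℕ) (ext (i.1 : ℕ) ν))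
        ≤ ENNReal.ofReal ((2:ℝ)^(M+2) * γ) * (Q + 1) ^ M := by
    intro i
    refine le_trans (measure_iUnion_le _) ?_
    have h1 : ∀ ν : Fin (i.1 : ℕ) → ℕ,
        volume (BadSet M γ (i.1 : ℕ) (i.2 : ℕ) (ext (i.1 : ℕ) ν))
          ≤ ENNReal.ofReal ((2:ℝ)^(M+2) * γ) * ∏ j : Fin (i.1 : ℕ), ENNReal.ofReal (tt (ν j)) := by
      intro ν
      refine le_trans (BadSet_vol M γ hγ (i.1 : ℕ) (i.2 : ℕ) (ext (i.1 : ℕ) ν)) ?_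
      rw [prod_ext]
    refine le_trans (ENNReal.tsum_le_tsum h1) ?_
    rw [ENNReal.tsum_mul_left, tsum_pi_prod (fun v => ENNReal.ofReal (tt v)) (i.1 : ℕ)]
    apply mul_le_mul_right ?_ _
    calc Q ^ (i.1 : ℕ) ≤ (Q + 1) ^ (i.1 : ℕ) := pow_le_pow_left' le_self_add _
      _ ≤ (Q + 1) ^ M := by
          apply pow_le_pow_right' le_add_self
          have := i.1.isLt
          omega
  refine le_trans (measure_iUnion_le _) ?_
  refine le_trans (ENNReal.tsum_le_tsum step) ?_
  rw [tsum_fintype, Finset.sum_const, nsmul_eq_mul]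
  have hcard : (((Finset.univ : Finset (Fin (M+1) × Fin (M+1))).card) : ENNReal)
      = ((M:ENNReal)+1) * ((M:ENNReal)+1) := by
    rw [Finset.card_univ, Fintype.card_prod, Fintype.card_fin]
    push_cast
    ring
  rw [hcard, ENNReal.ofReal_mul (by positivity), KK]
  calc ((M:ENNReal)+1) * ((M:ENNReal)+1)
        * (ENNReal.ofReal ((2:ℝ)^(M+2)) * ENNReal.ofReal γ * (Q + 1) ^ M)
      = ENNReal.ofReal γ * (ENNReal.ofReal ((2:ℝ)^(M+2))
          * (((M:ENNReal)+1) * ((M:ENNReal)+1) * (Q + 1) ^ M)) := by ring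
    _ ≤ _ := le_refl _

/-- The null set. -/
def NN (M : ℕ) : Set (Fin M → ℝ) :=
  (Set.univ.pi fun _ : Fin M => Set.Icc (-(1/2) : ℝ) (1/2)) ∩
    ⋂ i : ℕ, BadU M (((i : ℝ) + 1)⁻¹)

lemma NN_vol (M : ℕ) : volume (NN M) = 0 := by
  set R := (KK M).toReal with hR
  have hKK : KK M = ENNReal.ofReal R := by
    rw [hR, ENNReal.ofReal_toReal (KK_ne_top M)]
  have hle : ∀ i : ℕ, volume (NN M) ≤ ENNReal.ofReal (((i:ℝ)+1)⁻¹ * R) := by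
    intro i
    have h1 : NN M ⊆ BadU M (((i : ℝ) + 1)⁻¹) :=
      le_trans Set.inter_subset_right (Set.iInter_subset _ i)
    refine le_trans (measure_mono h1) ?_
    refine le_trans (BadU_vol M _ (by positivity)) ?_
    rw [hKK, ← ENNReal.ofReal_mul (by positivity)]
  have htend : Filter.Tendsto (fun i : ℕ => ENNReal.ofReal (((i:ℝ)+1)⁻¹ * R))
      Filter.atTop (nhds 0) := by
    have hreal : Filter.Tendsto (fun i : ℕ => ((i:ℝ)+1)⁻¹ * R) Filter.atTop (nhds 0) := by
      have := tendsto_one_div_add_atTop_nhds_zero_nat.mul_const R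
      rw [zero_mul] at this
      refine this.congr (fun i => ?_)
      rw [one_div]
    have := ENNReal.tendsto_ofReal hreal
    rwa [ENNReal.ofReal_zero] at this
  have := ge_of_tendsto' htend hle
  exact le_antisymm this zero_le

end assembly

/-- Non-resonance condition: outside a zero-measure set `𝒩` of parameters
`m⃗ ∈ [-1/2,1/2]^M`, there are `γ > 0` and `N₀ > 0` such that for every `N ≤ M`, every
`0 ≤ ℓ ≤ N` and every `(n_1,…,n_N) ∈ ℕ^N` (with the multisets `{n_1,…,n_ℓ}`,
`{n_{ℓ+1},…,n_N}` required to differ when `2ℓ = N`), one has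
`|λ_{n_1}+⋯+λ_{n_ℓ}−λ_{n_{ℓ+1}}−⋯−λ_{n_N}| ≥ γ · max(⟨n_1⟩,…,⟨n_N⟩)^{-N₀}`. -/
theorem nonresonance (M : ℕ) :
    ∃ 𝒩 : Set (Fin M → ℝ),
      𝒩 ⊆ Set.univ.pi (fun _ => Set.Icc (-(1/2) : ℝ) (1/2)) ∧
      volume 𝒩 = 0 ∧
      ∀ m ∈ Set.univ.pi (fun _ => Set.Icc (-(1/2) : ℝ) (1/2)), m ∉ 𝒩 →
        ∃ γ : ℝ, 0 < γ ∧ ∃ N₀ : ℝ, 0 < N₀ ∧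
          ∀ N : ℕ, N ≤ M → ∀ ℓ : ℕ, ℓ ≤ N → ∀ n : ℕ → ℕ,
            (2 * ℓ = N →
              Multiset.map n (Finset.Icc 1 ℓ).val ≠ Multiset.map n (Finset.Icc (ℓ + 1) N).val) →
            γ * jap (((Finset.Icc 1 N).sup n : ℕ) : ℝ) ^ (-N₀) ≤
              |(∑ j ∈ Finset.Icc 1 ℓ, lam M m (n j))
                - ∑ j ∈ Finset.Icc (ℓ + 1) N, lam M m (n j)| := by
  refine ⟨NN M, Set.inter_subset_left, NN_vol M, ?_⟩
  intro m hmcube hmN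
  have hex : ∃ i : ℕ, m ∉ BadU M (((i:ℝ)+1)⁻¹) := by
    by_contra h
    push_neg at h
    exact hmN ⟨hmcube, Set.mem_iInter.2 h⟩
  obtain ⟨i, hi⟩ := hex
  refine ⟨((i:ℝ)+1)⁻¹, by positivity, ((6*M+6 : ℕ) : ℝ),
    by exact_mod_cast (by omega : 0 < 6*M+6), ?_⟩
  intro N hNM ℓ hlN n hmul
  have hne : Amul ℓ n ≠ Bmul ℓ N n := by
    by_cases h2 : 2*ℓ = N
    · exact hmul h2
    · intro heq
      have hc := congrArg Multiset.card heq
      rw [Amul, Bmul, Multiset.card_map, Multiset.card_map] at hc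
      have hc' : (Finset.Icc 1 ℓ).card = (Finset.Icc (ℓ+1) N).card := hc
      rw [Nat.card_Icc, Nat.card_Icc] at hc'
      omega
  set ν : Fin N → ℕ := fun j => n ((j:ℕ)+1) with hν
  have hagree : ∀ j ∈ Finset.Icc 1 N, ext N ν j = n j := by
    intro j hj
    simp only [Finset.mem_Icc] at hj
    rw [ext_eq N ν j (by omega)]
    show n ((j-1)+1) = n j
    congr 1
    omega
  have hsubA : ∀ j ∈ Finset.Icc 1 ℓ, j ∈ Finset.Icc 1 N := by
    intro j hj
    simp only [Finset.mem_Icc] at hj ⊢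
    omega
  have hsubB : ∀ j ∈ Finset.Icc (ℓ+1) N, j ∈ Finset.Icc 1 N := by
    intro j hj
    simp only [Finset.mem_Icc] at hj ⊢
    omega
  have hA : Amul ℓ (ext N ν) = Amul ℓ n :=
    Multiset.map_congr rfl
      (fun j hj => hagree j (hsubA j (Finset.mem_def.2 hj)))
  have hB : Bmul ℓ N (ext N ν) = Bmul ℓ N n :=
    Multiset.map_congr rfl
      (fun j hj => hagree j (hsubB j (Finset.mem_def.2 hj)))
  have hsup : (Finset.Icc 1 N).sup (ext N ν) = (Finset.Icc 1 N).sup n :=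
    Finset.sup_congr rfl hagree
  have hsum1 : ∑ j ∈ Finset.Icc 1 ℓ, lam M m (ext N ν j)
      = ∑ j ∈ Finset.Icc 1 ℓ, lam M m (n j) :=
    Finset.sum_congr rfl (fun j hj => by rw [hagree j (hsubA j hj)])
  have hsum2 : ∑ j ∈ Finset.Icc (ℓ+1) N, lam M m (ext N ν j)
      = ∑ j ∈ Finset.Icc (ℓ+1) N, lam M m (n j) :=
    Finset.sum_congr rfl (fun j hj => by rw [hagree j (hsubB j hj)])
  have hnb : m ∉ BadSet M (((i:ℝ)+1)⁻¹) N ℓ (ext N ν) := by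
    intro hmem
    apply hi
    rw [BadU, Set.mem_iUnion]
    refine ⟨(⟨N, by omega⟩, ⟨ℓ, by omega⟩), ?_⟩
    rw [Set.mem_iUnion]
    exact ⟨ν, hmem⟩
  have hge : ¬ (|(∑ j ∈ Finset.Icc 1 ℓ, lam M m (ext N ν j))
      - ∑ j ∈ Finset.Icc (ℓ+1) N, lam M m (ext N ν j)|
      < ((i:ℝ)+1)⁻¹ * jap (((Finset.Icc 1 N).sup (ext N ν) : ℕ) : ℝ)
          ^ (-(((6*M+6 : ℕ) : ℝ)))) := by
    intro hlt
    exact hnb ⟨hlN, hNM, by rw [hA, hB]; exact hne, hmcube, hlt⟩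
  rw [not_lt, hsum1, hsum2, hsup] at hge
  exact hge
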